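/- Let u : [0,T] × ℝ → [0,∞) satisfy ‖u(t₁,·) − u(t₂,·)‖_{L¹(ℝ)} ≤ L|t₁ − t₂| and ‖u(t,·)‖_{L¹(ℝ)} ≤ M for all t, and let μ ∈ L¹(ℝ) with μ ≥ 0, Γ_δ ≥ 0 supported in [0,δ] with ∫₀^δ Γ_δ = 1. Then ∫₀^T ∫_ℝ |∫₀^t ∫_ℝ u(τ,ξ) μ(x−ξ) Γ_δ(t−τ) dξ dτ − ∫_ℝ u(t,ξ) μ(x−ξ) dξ| dx dt ≤ (2M + LT) ‖μ‖_{L¹} δ. -/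

import Mathlib

open MeasureTheory Set Filter Function
open scoped ENNReal NNReal Topology

lemma conv_facts {f g : ℝ → ℝ} (hf : Integrable f) (hg : Integrable g) :
    Integrable (fun x => ∫ ξ, f ξ * g (x - ξ)) ∧
      (∫ x, ∫ ξ, f ξ * g (x - ξ)) = (∫ x, f x) * (∫ x, g x) ∧
      ∀ᵐ x, Integrable (fun ξ => f ξ * g (x - ξ)) := by
  have h1 := hf.integrable_convolution (ContinuousLinearMap.mul ℝ ℝ) hg
  have h2 := integral_convolution (ContinuousLinearMap.mul ℝ ℝ) hf hg
  have h3 := hf.ae_convolution_exists (ContinuousLinearMap.mul ℝ ℝ) hg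
  simp only [convolution_def, ContinuousLinearMap.mul_apply', ConvolutionExistsAt] at h1 h2 h3
  exact ⟨h1, h2, h3⟩

lemma exists_good_version (u : ℝ → ℝ → ℝ) (T L : ℝ) (hT : 0 < T) (hL0 : 0 ≤ L)
    (hunn : ∀ t x, 0 ≤ u t x) (huint : ∀ t, Integrable (u t))
    (huLip : ∀ t₁ ∈ Icc (0:ℝ) T, ∀ t₂ ∈ Icc (0:ℝ) T,
        ∫ ξ, |u t₁ ξ - u t₂ ξ| ≤ L * |t₁ - t₂|) :
    ∃ v : ℝ → ℝ → ℝ, StronglyMeasurable (Function.uncurry v) ∧ (∀ τ ξ, 0 ≤ v τ ξ) ∧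
      ∀ᵐ τ ∂(volume.restrict (Ioc (0:ℝ) T)), v τ =ᵐ[volume] u τ := by
  classical
  -- measurable versions of each time-slice
  set w : ℝ → ℝ → ℝ := fun r => ((huint r).1.mk (u r)) with hw
  have hw_sm : ∀ r, StronglyMeasurable (w r) := fun r => (huint r).1.stronglyMeasurable_mk
  have hw_ae : ∀ r, u r =ᵐ[volume] w r := fun r => (huint r).1.ae_eq_mk
  -- clamp to [0, T]
  set clamp : ℝ → ℝ := fun y => max 0 (min y T) with hclamp
  have hclamp_mem : ∀ y, clamp y ∈ Icc (0:ℝ) T := by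
    intro y
    exact ⟨le_max_left _ _, max_le hT.le (min_le_right _ _)⟩
  have hclamp_lip : ∀ a b, |clamp a - clamp b| ≤ |a - b| := by
    intro a b
    have h1 : |clamp a - clamp b| ≤ |min a T - min b T| := by
      simpa [hclamp, max_comm] using abs_max_sub_max_le_abs (min a T) (min b T) 0
    refine h1.trans ?_
    simpa using abs_min_sub_min_le_max a T b T
  have hclamp_eq : ∀ y ∈ Icc (0:ℝ) T, clamp y = y := by
    rintro y ⟨h0, h1⟩
    simp [hclamp, min_eq_left h1, max_eq_right h0]
  -- dyadic approximations
  set a : ℕ → ℝ → ℝ := fun n τ => (⌊τ * 2 ^ n⌋ : ℝ) / 2 ^ n with ha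
  have hpow : ∀ n : ℕ, (0:ℝ) < 2 ^ n := fun n => by positivity
  have ha_le : ∀ n τ, a n τ ≤ τ := by
    intro n τ
    rw [ha]
    rw [div_le_iff₀ (hpow n)]
    exact Int.floor_le _
  have ha_gt : ∀ n τ, τ - (2 ^ n)⁻¹ < a n τ := by
    intro n τ
    rw [ha]
    rw [lt_div_iff₀ (hpow n), sub_mul, inv_mul_cancel₀ (hpow n).ne']
    exact Int.sub_one_lt_floor _
  set c : ℕ → ℝ → ℝ := fun n τ => clamp (a n τ) with hc
  have hc_mem : ∀ n τ, c n τ ∈ Icc (0:ℝ) T := fun n τ => hclamp_mem _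
  have hc_close : ∀ n, ∀ τ ∈ Icc (0:ℝ) T, |c n τ - τ| ≤ (2 ^ n)⁻¹ := by
    intro n τ hτ
    have := hclamp_lip (a n τ) τ
    rw [hclamp_eq τ hτ] at this
    refine this.trans ?_
    rw [abs_le]
    constructor
    · nlinarith [ha_gt n τ]
    · nlinarith [ha_le n τ, inv_nonneg.2 (hpow n).le]
  have hc_step : ∀ n τ, |c n τ - c (n + 1) τ| ≤ (2 ^ n)⁻¹ := by
    intro n τ
    refine (hclamp_lip _ _).trans ?_
    have h1 := ha_le n τ
    have h2 := ha_gt n τ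
    have h3 := ha_le (n + 1) τ
    have h4 := ha_gt (n + 1) τ
    have h5 : ((2:ℝ) ^ (n + 1))⁻¹ ≤ (2 ^ n)⁻¹ := by
      apply inv_anti₀ (hpow n)
      rw [pow_succ]; nlinarith [hpow n]
    rw [abs_le]
    constructor <;> nlinarith
  -- the approximating sequence on the product space
  set U : ℕ → ℝ × ℝ → ℝ := fun n p => w (c n p.1) p.2 with hU
  have hU_sm : ∀ n, StronglyMeasurable (U n) := by
    intro n
    have key : Measurable fun q : ℝ × ℤ => w (clamp ((q.2 : ℝ) / 2 ^ n)) q.1 :=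
      measurable_from_prod_countable_left fun k =>
        (hw_sm (clamp ((k : ℝ) / 2 ^ n))).measurable
    have hfl : Measurable fun p : ℝ × ℝ => (⌊p.1 * 2 ^ n⌋ : ℤ) :=
      (measurable_fst.mul_const _).floor
    exact (key.comp (measurable_snd.prodMk hfl)).stronglyMeasurable
  -- L¹ distance estimate between slices
  have hdist : ∀ r ∈ Icc (0:ℝ) T, ∀ s ∈ Icc (0:ℝ) T,
      ∫⁻ ξ, (‖w r ξ - w s ξ‖₊ : ℝ≥0∞) ≤ ENNReal.ofReal (L * |r - s|) := by
    intro r hr s hs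
    have hint : Integrable (fun ξ => u r ξ - u s ξ) := (huint r).sub (huint s)
    have he : (fun ξ => (‖w r ξ - w s ξ‖₊ : ℝ≥0∞)) =ᵐ[volume]
        fun ξ => (‖u r ξ - u s ξ‖₊ : ℝ≥0∞) := by
      filter_upwards [hw_ae r, hw_ae s] with ξ h1 h2
      rw [h1, h2]
    rw [lintegral_congr_ae he]; simp only [← enorm_eq_nnnorm]; rw [← ofReal_integral_norm_eq_lintegral_enorm hint]
    apply ENNReal.ofReal_le_ofReal
    simpa [Real.norm_eq_abs] using huLip r hr s hs
  -- summability of increments over the product space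
  set ρ : Measure (ℝ × ℝ) := (volume.restrict (Ioc (0:ℝ) T)).prod volume with hρ
  have hinc_meas : ∀ n, Measurable fun p : ℝ × ℝ => (‖U n p - U (n + 1) p‖₊ : ℝ≥0∞) :=
    fun n => (((hU_sm n).measurable.sub (hU_sm (n + 1)).measurable).nnnorm).coe_nnreal_ennreal
  have hterm : ∀ n, ∫⁻ p, (‖U n p - U (n + 1) p‖₊ : ℝ≥0∞) ∂ρ ≤
      ENNReal.ofReal (L * T) * (ENNReal.ofReal 2⁻¹) ^ n := by
    intro n
    rw [hρ, lintegral_prod _ (hinc_meas n).aemeasurable]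
    have hin : ∀ τ, ∫⁻ ξ, (‖U n (τ, ξ) - U (n + 1) (τ, ξ)‖₊ : ℝ≥0∞) ∂volume ≤
        ENNReal.ofReal (L * (2 ^ n)⁻¹) := by
      intro τ
      refine (hdist _ (hc_mem n τ) _ (hc_mem (n + 1) τ)).trans ?_
      apply ENNReal.ofReal_le_ofReal
      exact mul_le_mul_of_nonneg_left (hc_step n τ) hL0
    calc ∫⁻ τ in Ioc (0:ℝ) T, ∫⁻ ξ, (‖U n (τ, ξ) - U (n + 1) (τ, ξ)‖₊ : ℝ≥0∞) ∂volume
        ≤ ∫⁻ _ in Ioc (0:ℝ) T, ENNReal.ofReal (L * (2 ^ n)⁻¹) :=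
          lintegral_mono fun τ => hin τ
      _ = ENNReal.ofReal (L * (2 ^ n)⁻¹) * volume (Ioc (0:ℝ) T) := by
          rw [lintegral_const, Measure.restrict_apply MeasurableSet.univ, univ_inter]
      _ ≤ ENNReal.ofReal (L * T) * (ENNReal.ofReal 2⁻¹) ^ n := by
          rw [Real.volume_Ioc, sub_zero, ← inv_pow,
            ← ENNReal.ofReal_pow (by norm_num : (0:ℝ) ≤ 2⁻¹),
            ENNReal.ofReal_mul hL0, ENNReal.ofReal_mul hL0]
          exact le_of_eq (by ring)
  have hsum : ∑' n, ∫⁻ p, (‖U n p - U (n + 1) p‖₊ : ℝ≥0∞) ∂ρ ≠ ⊤ := by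
    apply ne_top_of_le_ne_top (b := ENNReal.ofReal (L * T) * (1 - ENNReal.ofReal 2⁻¹)⁻¹)
    · apply ENNReal.mul_ne_top ENNReal.ofReal_ne_top
      rw [ENNReal.inv_ne_top]
      intro h0
      have : ENNReal.ofReal 2⁻¹ < 1 := by
        rw [← ENNReal.ofReal_one]
        exact ENNReal.ofReal_lt_ofReal_iff_of_nonneg (by norm_num) |>.mpr (by norm_num)
      rw [tsub_eq_zero_iff_le] at h0
      exact absurd h0 (not_le.mpr this)
    · refine (ENNReal.tsum_le_tsum hterm).trans ?_
      rw [ENNReal.tsum_mul_left, ENNReal.tsum_geometric]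
  -- almost everywhere convergence on the product space
  have hae_conv : ∀ᵐ p ∂ρ, ∃ l, Tendsto (fun n => U n p) atTop (𝓝 l) := by
    have htsum : ∫⁻ p, ∑' n, (‖U n p - U (n + 1) p‖₊ : ℝ≥0∞) ∂ρ ≠ ⊤ := by
      rw [lintegral_tsum fun n => (hinc_meas n).aemeasurable]
      exact hsum
    have hfin := ae_lt_top (f := fun p => ∑' n, (‖U n p - U (n + 1) p‖₊ : ℝ≥0∞))
      (Measurable.ennreal_tsum hinc_meas) htsum
    filter_upwards [hfin] with p hp
    have hcs : CauchySeq fun n => U n p := by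
      apply cauchySeq_of_edist_le_of_tsum_ne_top
        (fun n => (‖U n p - U (n + 1) p‖₊ : ℝ≥0∞)) _ hp.ne
      intro n
      rw [edist_eq_enorm_sub, enorm_eq_nnnorm]
    exact cauchySeq_tendsto_of_complete hcs
  obtain ⟨Vl, hVl_sm, hVl_td⟩ :=
    exists_stronglyMeasurable_limit_of_tendsto_ae (fun n => (hU_sm n).aestronglyMeasurable)
      hae_conv
  refine ⟨fun τ ξ => max (Vl (τ, ξ)) 0, ?_, fun τ ξ => le_max_right _ _, ?_⟩
  · exact hVl_sm.sup stronglyMeasurable_const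
  · have h1 := Measure.ae_ae_of_ae_prod hVl_td
    filter_upwards [h1, ae_restrict_mem measurableSet_Ioc] with τ htd hτmem
    have hτIcc : τ ∈ Icc (0:ℝ) T := ⟨hτmem.1.le, hτmem.2⟩
    -- Fatou argument
    have hzero : ∫⁻ ξ, (‖Vl (τ, ξ) - w τ ξ‖₊ : ℝ≥0∞) ∂volume = 0 := by
      have hmeasn : ∀ n, Measurable fun ξ => (‖w (c n τ) ξ - w τ ξ‖₊ : ℝ≥0∞) :=
        fun n => (((hw_sm _).measurable.sub (hw_sm τ).measurable).nnnorm).coe_nnreal_ennreal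
      have hcongr : (fun ξ => (‖Vl (τ, ξ) - w τ ξ‖₊ : ℝ≥0∞)) =ᵐ[volume]
          fun ξ => liminf (fun n => (‖w (c n τ) ξ - w τ ξ‖₊ : ℝ≥0∞)) atTop := by
        filter_upwards [htd] with ξ hξ
        have : Tendsto (fun n => (‖w (c n τ) ξ - w τ ξ‖₊ : ℝ≥0∞)) atTop
            (𝓝 (‖Vl (τ, ξ) - w τ ξ‖₊ : ℝ≥0∞)) := by
          have h2 : Tendsto (fun n => U n (τ, ξ) - w τ ξ) atTop (𝓝 (Vl (τ, ξ) - w τ ξ)) :=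
            hξ.sub tendsto_const_nhds
          exact (ENNReal.continuous_coe.tendsto _).comp
            ((continuous_nnnorm.tendsto _).comp h2)
        exact this.liminf_eq.symm
      rw [lintegral_congr_ae hcongr]
      refine le_antisymm ?_ zero_le
      refine (lintegral_liminf_le hmeasn).trans ?_
      have hb : ∀ n, ∫⁻ ξ, (‖w (c n τ) ξ - w τ ξ‖₊ : ℝ≥0∞) ∂volume ≤
          ENNReal.ofReal (L * (2 ^ n)⁻¹) := by
        intro n
        refine (hdist _ (hc_mem n τ) _ hτIcc).trans (ENNReal.ofReal_le_ofReal ?_)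
        exact mul_le_mul_of_nonneg_left (hc_close n τ hτIcc) hL0
      have hlim : Tendsto (fun n => ENNReal.ofReal (L * (2 ^ n)⁻¹)) atTop (𝓝 0) := by
        rw [← ENNReal.ofReal_zero]
        apply ENNReal.tendsto_ofReal
        have : Tendsto (fun n : ℕ => ((2:ℝ) ^ n)⁻¹) atTop (𝓝 0) :=
          tendsto_inv_atTop_zero.comp (tendsto_pow_atTop_atTop_of_one_lt one_lt_two)
        simpa using this.const_mul L
      calc liminf (fun n => ∫⁻ ξ, (‖w (c n τ) ξ - w τ ξ‖₊ : ℝ≥0∞) ∂volume) atTop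
          ≤ liminf (fun n => ENNReal.ofReal (L * (2 ^ n)⁻¹)) atTop :=
            liminf_le_liminf (Eventually.of_forall hb)
        _ = 0 := hlim.liminf_eq
    have hae_eq : ∀ᵐ ξ ∂volume, Vl (τ, ξ) = w τ ξ := by
      have hmeas : Measurable fun ξ => (‖Vl (τ, ξ) - w τ ξ‖₊ : ℝ≥0∞) := by
        have : Measurable fun ξ => Vl (τ, ξ) :=
          hVl_sm.measurable.comp (measurable_const.prodMk measurable_id)
        exact ((this.sub (hw_sm τ).measurable).nnnorm).coe_nnreal_ennreal
      have := (lintegral_eq_zero_iff hmeas).mp hzero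
      filter_upwards [this] with ξ hξ
      simpa [sub_eq_zero] using hξ
    filter_upwards [hae_eq, hw_ae τ] with ξ h1 h2
    rw [h1, ← h2, max_eq_left (hunn τ ξ)]

/-- Key `I₁` estimate in the memory-to-memoryless limit: the memory convolution
differs from the instantaneous spatial convolution by at most
`(2M + LT)‖μ‖_{L¹} δ` in `L¹((0,T)×ℝ)`. -/
theorem memory_to_memoryless_I1_estimate
    (u : ℝ → ℝ → ℝ) (μ Γδ : ℝ → ℝ) (T M L Kμ δ : ℝ)
    (hT : 0 < T) (hδ : 0 < δ)
    (hunn : ∀ t x, 0 ≤ u t x)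
    (huint : ∀ t, Integrable (u t))
    (humass : ∀ t, t ∈ Icc 0 T → ∫ ξ, u t ξ ≤ M)
    (huLip : ∀ t₁ ∈ Icc (0:ℝ) T, ∀ t₂ ∈ Icc (0:ℝ) T,
        ∫ ξ, |u t₁ ξ - u t₂ ξ| ≤ L * |t₁ - t₂|)
    (hμnn : ∀ x, 0 ≤ μ x) (hμint : Integrable μ)
    (hμnorm : ∫ x, μ x ≤ Kμ)
    (hΓnn : ∀ t, 0 ≤ Γδ t)
    (hΓsupp : ∀ t, t ∉ Icc (0:ℝ) δ → Γδ t = 0)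
    (hΓint : IntegrableOn Γδ (Icc 0 δ))
    (hΓmass : ∫ t in Icc (0:ℝ) δ, Γδ t = 1) :
    ∫ t in Icc (0:ℝ) T, ∫ x,
        |(∫ τ in Ioc (0:ℝ) t, ∫ ξ, u τ ξ * μ (x - ξ) * Γδ (t - τ)) -
          ∫ ξ, u t ξ * μ (x - ξ)|
      ≤ (2 * M + L * T) * Kμ * δ := by
  classical
  -- nonnegativity of the constants
  have hM0 : 0 ≤ M := le_trans (integral_nonneg (hunn 0)) (humass 0 ⟨le_rfl, hT.le⟩)
  have hK0 : 0 ≤ Kμ := le_trans (integral_nonneg hμnn) hμnorm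
  have hL0 : 0 ≤ L := by
    have h1 := huLip 0 ⟨le_rfl, hT.le⟩ T ⟨hT.le, le_rfl⟩
    have h2 : (0:ℝ) ≤ ∫ ξ, |u 0 ξ - u T ξ| := integral_nonneg fun ξ => abs_nonneg _
    rw [zero_sub, abs_neg, abs_of_nonneg hT.le] at h1
    nlinarith
  -- measurable nonnegative version of μ
  set m : ℝ → ℝ := fun y => max (hμint.1.mk μ y) 0 with hm_def
  have hm_sm : StronglyMeasurable m := hμint.1.stronglyMeasurable_mk.sup stronglyMeasurable_const
  have hm_ae : μ =ᵐ[volume] m := by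
    filter_upwards [hμint.1.ae_eq_mk] with y hy
    simp only [hm_def, ← hy, max_eq_left (hμnn y)]
  have hm_nonneg : ∀ y, 0 ≤ m y := fun y => le_max_right _ _
  have hm_int : Integrable m := hμint.congr hm_ae
  have hm_norm : ∫ y, m y ≤ Kμ := by
    rw [← integral_congr_ae hm_ae]; exact hμnorm
  have hm_nonneg' : 0 ≤ ∫ y, m y := integral_nonneg hm_nonneg
  -- measurable nonnegative version of Γδ supported in [0, δ]
  have hΓsm := hΓint.aestronglyMeasurable
  set G : ℝ → ℝ := indicator (Icc 0 δ) (fun y => max (hΓsm.mk Γδ y) 0) with hG_def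
  have hG_sm : StronglyMeasurable G :=
    (hΓsm.stronglyMeasurable_mk.sup stronglyMeasurable_const).indicator measurableSet_Icc
  have hG_nonneg : ∀ y, 0 ≤ G y := fun y =>
    indicator_nonneg (fun z _ => le_max_right _ _) y
  have hG_supp : ∀ y, y ∉ Icc (0:ℝ) δ → G y = 0 := fun y hy => indicator_of_notMem hy _
  have hG_restrict : Γδ =ᵐ[volume.restrict (Icc 0 δ)] fun y => max (hΓsm.mk Γδ y) 0 := by
    filter_upwards [hΓsm.ae_eq_mk] with y hy
    rw [← hy, max_eq_left (hΓnn y)]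
  have hG_ae : Γδ =ᵐ[volume] G := by
    have h1 : ∀ᵐ y ∂(volume : Measure ℝ), y ∈ Icc (0:ℝ) δ → Γδ y = hΓsm.mk Γδ y :=
      (ae_restrict_iff' measurableSet_Icc).mp hΓsm.ae_eq_mk
    filter_upwards [h1] with y hy
    by_cases hmem : y ∈ Icc (0:ℝ) δ
    · rw [hG_def, indicator_of_mem hmem, ← hy hmem, max_eq_left (hΓnn y)]
    · rw [hG_def, indicator_of_notMem hmem, hΓsupp y hmem]
  have hG_int : Integrable G := by
    rw [hG_def, integrable_indicator_iff measurableSet_Icc]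
    exact hΓint.congr hG_restrict
  have hG_mass : ∫ y, G y = 1 := by
    have h1 : ∫ y, G y = ∫ y in Icc (0:ℝ) δ, G y :=
      (setIntegral_eq_integral_of_forall_compl_eq_zero fun y hy => hG_supp y hy).symm
    rw [h1, ← hΓmass]
    exact (integral_congr_ae (ae_restrict_of_ae hG_ae)).symm
  -- jointly measurable nonnegative version of u
  obtain ⟨v, hv_sm, hv_nonneg, hv_ae⟩ := exists_good_version u T L hT hL0 hunn huint huLip
  -- measurable nonnegative versions of the time-slices of u
  set wf : ℝ → ℝ → ℝ := fun t ξ => max ((huint t).1.mk (u t) ξ) 0 with hwf_def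
  have hwf_sm : ∀ t, StronglyMeasurable (wf t) := fun t =>
    (huint t).1.stronglyMeasurable_mk.sup stronglyMeasurable_const
  have hwf_ae : ∀ t, u t =ᵐ[volume] wf t := by
    intro t
    filter_upwards [(huint t).1.ae_eq_mk] with ξ hξ
    simp only [hwf_def, ← hξ, max_eq_left (hunn t ξ)]
  have hwf_nonneg : ∀ t ξ, 0 ≤ wf t ξ := fun t ξ => le_max_right _ _
  have hwf_int : ∀ t, Integrable (wf t) := fun t => (huint t).congr (hwf_ae t)
  -- the mollified spatial convolutions
  set Cv : ℝ → ℝ → ℝ := fun τ x => ∫ ξ, v τ ξ * m (x - ξ) with hCv_def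
  set D : ℝ → ℝ → ℝ := fun t x => ∫ ξ, wf t ξ * m (x - ξ) with hD_def
  have hCv_sm : StronglyMeasurable fun p : ℝ × ℝ => Cv p.1 p.2 := by
    have hker : StronglyMeasurable fun q : (ℝ × ℝ) × ℝ => v q.1.1 q.2 * m (q.1.2 - q.2) := by
      apply Measurable.stronglyMeasurable
      exact (hv_sm.measurable.comp (measurable_fst.fst.prodMk measurable_snd)).mul
        (hm_sm.measurable.comp (measurable_fst.snd.sub measurable_snd))
    exact hker.integral_prod_right'
  have hCv_nonneg : ∀ τ x, 0 ≤ Cv τ x := fun τ x =>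
    integral_nonneg fun ξ => mul_nonneg (hv_nonneg _ _) (hm_nonneg _)
  have hD_nonneg : ∀ t x, 0 ≤ D t x := fun t x =>
    integral_nonneg fun ξ => mul_nonneg (hwf_nonneg _ _) (hm_nonneg _)
  have hD_sm : ∀ t, StronglyMeasurable (D t) := by
    intro t
    have hker : StronglyMeasurable fun q : ℝ × ℝ => wf t q.2 * m (q.1 - q.2) := by
      apply Measurable.stronglyMeasurable
      exact ((hwf_sm t).measurable.comp measurable_snd).mul
        (hm_sm.measurable.comp (measurable_fst.sub measurable_snd))
    exact hker.integral_prod_right'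
  have hD_int : ∀ t, Integrable (D t) := fun t => (conv_facts (hwf_int t) hm_int).1
  have hD_val : ∀ t, ∫ x, D t x = (∫ ξ, wf t ξ) * ∫ y, m y := fun t =>
    (conv_facts (hwf_int t) hm_int).2.1
  have hD_le : ∀ t ∈ Icc (0:ℝ) T, ∫ x, D t x ≤ M * Kμ := by
    intro t ht
    rw [hD_val t, ← integral_congr_ae (hwf_ae t)]
    exact mul_le_mul (humass t ht) hm_norm hm_nonneg' hM0
  -- translation compatibility for a.e. rewrites
  have hmu_shift : ∀ x : ℝ, (fun ξ => μ (x - ξ)) =ᵐ[volume] fun ξ => m (x - ξ) := fun x =>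
    (Measure.measurePreserving_sub_left volume x).quasiMeasurePreserving.ae_eq_comp hm_ae
  have hΓG_shift : ∀ t : ℝ, (fun τ => Γδ (t - τ)) =ᵐ[volume] fun τ => G (t - τ) := fun t =>
    (Measure.measurePreserving_sub_left volume t).quasiMeasurePreserving.ae_eq_comp hG_ae
  -- the good a.e. set in τ
  have hv_good : ∀ᵐ τ ∂volume.restrict (Ioc (0:ℝ) T),
      (v τ =ᵐ[volume] u τ ∧ Integrable (v τ) ∧ (∫ ξ, v τ ξ) = ∫ ξ, u τ ξ) ∧
        ∀ x, (∫ ξ, u τ ξ * μ (x - ξ)) = Cv τ x := by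
    filter_upwards [hv_ae] with τ hτ
    refine ⟨⟨hτ, (huint τ).congr hτ.symm, integral_congr_ae hτ⟩, fun x => ?_⟩
    apply integral_congr_ae
    filter_upwards [hτ, hmu_shift x] with ξ h1 h2
    rw [← h1, h2]
  have hE2 : ∀ t x, (∫ ξ, u t ξ * μ (x - ξ)) = D t x := by
    intro t x
    apply integral_congr_ae
    filter_upwards [hwf_ae t, hmu_shift x] with ξ h1 h2
    rw [h1, h2]
  -- mass of the translated mollifier
  have hGt_int : ∀ t : ℝ, Integrable (fun τ => G (t - τ)) := fun t => hG_int.comp_sub_left t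
  have hmass_eq : ∀ t : ℝ, (∫ τ in Ioc (0:ℝ) t, G (t - τ)) = ∫ s in Ico (0:ℝ) t, G s := by
    intro t
    have hmp := Measure.measurePreserving_sub_left (volume : Measure ℝ) t
    have hemb : MeasurableEmbedding (fun τ : ℝ => t - τ) :=
      (MeasurableEquiv.subLeft t).measurableEmbedding
    have hpre : (fun τ : ℝ => t - τ) ⁻¹' (Ico (0:ℝ) t) = Ioc (0:ℝ) t := by
      ext τ
      simp only [mem_preimage, mem_Ico, mem_Ioc]
      constructor <;> intro h <;> constructor <;> linarith [h.1, h.2]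
    rw [← hpre, hmp.setIntegral_preimage_emb hemb]
  have hmass_le : ∀ t : ℝ, (∫ τ in Ioc (0:ℝ) t, G (t - τ)) ≤ 1 := by
    intro t
    rw [hmass_eq, ← hG_mass]
    exact setIntegral_le_integral hG_int (ae_of_all _ hG_nonneg)
  have hmass_one : ∀ t : ℝ, δ ≤ t → (∫ τ in Ioc (0:ℝ) t, G (t - τ)) = 1 := by
    intro t hδt
    rw [hmass_eq, ← integral_Icc_eq_integral_Ico, ← hG_mass]
    apply setIntegral_eq_integral_of_forall_compl_eq_zero
    intro y hy
    apply hG_supp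
    intro hmem
    exact hy ⟨hmem.1, hmem.2.trans hδt⟩
  -- product integrability of the main kernel
  have hprod : ∀ t ∈ Icc (0:ℝ) T, Integrable (fun p : ℝ × ℝ => G (t - p.1) * Cv p.1 p.2)
      ((volume.restrict (Ioc (0:ℝ) t)).prod volume) := by
    intro t ht
    have hv_good' := hv_good.filter_mono
      (ae_mono (Measure.restrict_mono (Ioc_subset_Ioc le_rfl ht.2) le_rfl))
    have hGm : StronglyMeasurable fun p : ℝ × ℝ => G (t - p.1) :=
      (hG_sm.measurable.comp (measurable_const.sub measurable_fst)).stronglyMeasurable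
    have hmeasP : AEStronglyMeasurable (fun p : ℝ × ℝ => G (t - p.1) * Cv p.1 p.2)
        ((volume.restrict (Ioc (0:ℝ) t)).prod volume) :=
      (hGm.mul hCv_sm).aestronglyMeasurable
    rw [integrable_prod_iff hmeasP]
    constructor
    · filter_upwards [hv_good'] with τ hτ
      exact ((conv_facts hτ.1.2.1 hm_int).1).const_mul _
    · apply Integrable.mono' (((hGt_int t).restrict).mul_const (M * Kμ))
      · have hSM : StronglyMeasurable fun τ : ℝ => ∫ x, ‖G (t - τ) * Cv τ x‖ := by
          have h0 : StronglyMeasurable fun p : ℝ × ℝ => ‖G (t - p.1) * Cv p.1 p.2‖ :=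
            (hGm.mul hCv_sm).norm
          exact h0.integral_prod_right'
        exact hSM.aestronglyMeasurable
      · filter_upwards [hv_good', ae_restrict_mem measurableSet_Ioc] with τ hτ hmem
        have hval : ∫ x, Cv τ x = (∫ ξ, v τ ξ) * ∫ y, m y := (conv_facts hτ.1.2.1 hm_int).2.1
        have hle : ∫ x, Cv τ x ≤ M * Kμ := by
          rw [hval, hτ.1.2.2]
          exact mul_le_mul (humass τ ⟨hmem.1.le, hmem.2.trans ht.2⟩) hm_norm hm_nonneg' hM0
        have hnn : 0 ≤ ∫ x, ‖G (t - τ) * Cv τ x‖ := integral_nonneg fun x => norm_nonneg _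
        rw [Real.norm_of_nonneg hnn]
        have heq : (fun x => ‖G (t - τ) * Cv τ x‖) = fun x => G (t - τ) * Cv τ x := by
          funext x
          rw [Real.norm_of_nonneg (mul_nonneg (hG_nonneg _) (hCv_nonneg _ _))]
        rw [heq, integral_const_mul]
        exact mul_le_mul_of_nonneg_left hle (hG_nonneg _)
  have hprod2 : ∀ t ∈ Icc (0:ℝ) T,
      Integrable (fun p : ℝ × ℝ => G (t - p.1) * |Cv p.1 p.2 - D t p.2|)
        ((volume.restrict (Ioc (0:ℝ) t)).prod volume) := by
    intro t ht
    have hGm : StronglyMeasurable fun p : ℝ × ℝ => G (t - p.1) :=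
      (hG_sm.measurable.comp (measurable_const.sub measurable_fst)).stronglyMeasurable
    have hDm : StronglyMeasurable fun p : ℝ × ℝ => D t p.2 :=
      (hD_sm t).comp_measurable measurable_snd
    have hmaj : Integrable
        (fun p : ℝ × ℝ => G (t - p.1) * Cv p.1 p.2 + G (t - p.1) * D t p.2)
        ((volume.restrict (Ioc (0:ℝ) t)).prod volume) := by
      refine (hprod t ht).add ?_
      exact ((hGt_int t).restrict).mul_prod (hD_int t)
    apply Integrable.mono' hmaj
    · exact (hGm.mul ((hCv_sm.sub hDm).measurable.abs.stronglyMeasurable)).aestronglyMeasurable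
    · apply ae_of_all
      intro p
      have h1 : |Cv p.1 p.2 - D t p.2| ≤ Cv p.1 p.2 + D t p.2 := by
        rw [abs_le]
        constructor
        · have := hCv_nonneg p.1 p.2; have := hD_nonneg t p.2; linarith
        · have := hCv_nonneg p.1 p.2; have := hD_nonneg t p.2; linarith
      have h2 : 0 ≤ G (t - p.1) * |Cv p.1 p.2 - D t p.2| :=
        mul_nonneg (hG_nonneg _) (abs_nonneg _)
      rw [Real.norm_of_nonneg h2]
      calc G (t - p.1) * |Cv p.1 p.2 - D t p.2| ≤ G (t - p.1) * (Cv p.1 p.2 + D t p.2) :=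
            mul_le_mul_of_nonneg_left h1 (hG_nonneg _)
        _ = G (t - p.1) * Cv p.1 p.2 + G (t - p.1) * D t p.2 := by ring
  -- bound valid for every t : the crude 2 M Kμ bound
  have keyB : ∀ t ∈ Icc (0:ℝ) T,
      (∫ x, |(∫ τ in Ioc (0:ℝ) t, G (t - τ) * Cv τ x) - D t x|) ≤ 2 * (M * Kμ) := by
    intro t ht
    have hv_good' := hv_good.filter_mono
      (ae_mono (Measure.restrict_mono (Ioc_subset_Ioc le_rfl ht.2) le_rfl))
    have hH2_int : Integrable (fun x => ∫ τ in Ioc (0:ℝ) t, G (t - τ) * Cv τ x) :=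
      (hprod t ht).integral_prod_right
    have hA_nonneg : ∀ x, 0 ≤ ∫ τ in Ioc (0:ℝ) t, G (t - τ) * Cv τ x := fun x =>
      integral_nonneg fun τ => mul_nonneg (hG_nonneg _) (hCv_nonneg _ _)
    have step1 : (∫ x, |(∫ τ in Ioc (0:ℝ) t, G (t - τ) * Cv τ x) - D t x|) ≤
        ∫ x, ((∫ τ in Ioc (0:ℝ) t, G (t - τ) * Cv τ x) + D t x) := by
      apply integral_mono_of_nonneg (ae_of_all _ fun x => abs_nonneg _)
        (hH2_int.add (hD_int t))
      apply ae_of_all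
      intro x
      simp only [Pi.add_apply]
      rw [abs_le]
      constructor
      · have := hA_nonneg x; have := hD_nonneg t x; linarith
      · have := hA_nonneg x; have := hD_nonneg t x; linarith
    have step2 : (∫ x, ((∫ τ in Ioc (0:ℝ) t, G (t - τ) * Cv τ x) + D t x)) =
        (∫ x, ∫ τ in Ioc (0:ℝ) t, G (t - τ) * Cv τ x) + ∫ x, D t x :=
      integral_add hH2_int (hD_int t)
    have step3 : (∫ x, ∫ τ in Ioc (0:ℝ) t, G (t - τ) * Cv τ x) ≤ M * Kμ := by
      rw [← integral_integral_swap (hprod t ht)]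
      have hin : ∀ τ, (∫ x, G (t - τ) * Cv τ x) = G (t - τ) * ∫ x, Cv τ x := fun τ =>
        integral_const_mul _ _
      calc (∫ τ in Ioc (0:ℝ) t, ∫ x, G (t - τ) * Cv τ x)
          ≤ ∫ τ in Ioc (0:ℝ) t, G (t - τ) * (M * Kμ) := by
            apply integral_mono_of_nonneg
            · apply ae_of_all; intro τ
              exact integral_nonneg fun x => mul_nonneg (hG_nonneg _) (hCv_nonneg _ _)
            · exact ((hGt_int t).restrict).mul_const _
            · filter_upwards [hv_good', ae_restrict_mem measurableSet_Ioc] with τ hτ hmem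
              rw [hin τ]
              have hval : ∫ x, Cv τ x = (∫ ξ, v τ ξ) * ∫ y, m y :=
                (conv_facts hτ.1.2.1 hm_int).2.1
              have hle : ∫ x, Cv τ x ≤ M * Kμ := by
                rw [hval, hτ.1.2.2]
                exact mul_le_mul (humass τ ⟨hmem.1.le, hmem.2.trans ht.2⟩) hm_norm
                  hm_nonneg' hM0
              exact mul_le_mul_of_nonneg_left hle (hG_nonneg _)
        _ = (∫ τ in Ioc (0:ℝ) t, G (t - τ)) * (M * Kμ) := integral_mul_const _ _
        _ ≤ 1 * (M * Kμ) :=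
            mul_le_mul_of_nonneg_right (hmass_le t) (mul_nonneg hM0 hK0)
        _ = M * Kμ := one_mul _
    calc (∫ x, |(∫ τ in Ioc (0:ℝ) t, G (t - τ) * Cv τ x) - D t x|)
        ≤ (∫ x, ∫ τ in Ioc (0:ℝ) t, G (t - τ) * Cv τ x) + ∫ x, D t x := by
          rw [← step2]; exact step1
      _ ≤ M * Kμ + M * Kμ := add_le_add step3 (hD_le t ht)
      _ = 2 * (M * Kμ) := by ring
  -- the sharp bound for δ ≤ t
  have keyA : ∀ t ∈ Icc (0:ℝ) T, δ ≤ t →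
      (∫ x, |(∫ τ in Ioc (0:ℝ) t, G (t - τ) * Cv τ x) - D t x|) ≤ L * Kμ * δ := by
    intro t ht hδt
    have hv_good' := hv_good.filter_mono
      (ae_mono (Measure.restrict_mono (Ioc_subset_Ioc le_rfl ht.2) le_rfl))
    have hH_int : Integrable (fun x => ∫ τ in Ioc (0:ℝ) t, G (t - τ) * |Cv τ x - D t x|) :=
      (hprod2 t ht).integral_prod_right
    have hslice := (hprod t ht).prod_left_ae
    -- pointwise bound for a.e. x
    have hpoint : ∀ᵐ x ∂(volume : Measure ℝ),
        |(∫ τ in Ioc (0:ℝ) t, G (t - τ) * Cv τ x) - D t x| ≤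
          ∫ τ in Ioc (0:ℝ) t, G (t - τ) * |Cv τ x - D t x| := by
      filter_upwards [hslice] with x hx
      have h2 : Integrable (fun τ => G (t - τ) * D t x) (volume.restrict (Ioc (0:ℝ) t)) :=
        ((hGt_int t).restrict).mul_const _
      have h3 : D t x = ∫ τ in Ioc (0:ℝ) t, G (t - τ) * D t x := by
        rw [integral_mul_const, hmass_one t hδt, one_mul]
      have h4 : (∫ τ in Ioc (0:ℝ) t, G (t - τ) * Cv τ x) - D t x =
          ∫ τ in Ioc (0:ℝ) t, (G (t - τ) * Cv τ x - G (t - τ) * D t x) := by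
        rw [integral_sub hx h2, ← h3]
      rw [h4]
      rw [← Real.norm_eq_abs]
      refine (norm_integral_le_integral_norm _).trans_eq ?_
      congr 1
      funext τ
      rw [Real.norm_eq_abs, ← mul_sub, abs_mul, abs_of_nonneg (hG_nonneg _)]
    have step1 : (∫ x, |(∫ τ in Ioc (0:ℝ) t, G (t - τ) * Cv τ x) - D t x|) ≤
        ∫ x, ∫ τ in Ioc (0:ℝ) t, G (t - τ) * |Cv τ x - D t x| :=
      integral_mono_of_nonneg (ae_of_all _ fun x => abs_nonneg _) hH_int hpoint
    have step2 : (∫ x, ∫ τ in Ioc (0:ℝ) t, G (t - τ) * |Cv τ x - D t x|) =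
        ∫ τ in Ioc (0:ℝ) t, ∫ x, G (t - τ) * |Cv τ x - D t x| :=
      (integral_integral_swap (hprod2 t ht)).symm
    -- the Lipschitz bound on the inner integral
    have hlip : ∀ᵐ τ ∂volume.restrict (Ioc (0:ℝ) t),
        (∫ x, G (t - τ) * |Cv τ x - D t x|) ≤ G (t - τ) * (L * Kμ * δ) := by
      filter_upwards [hv_good', ae_restrict_mem measurableSet_Ioc] with τ hτ hmem
      rw [integral_const_mul]
      by_cases hGz : G (t - τ) = 0
      · rw [hGz, zero_mul, zero_mul]
      · have hmemΓ : t - τ ∈ Icc (0:ℝ) δ := by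
          by_contra hc
          exact hGz (hG_supp _ hc)
        have hτIcc : τ ∈ Icc (0:ℝ) T := ⟨hmem.1.le, hmem.2.trans ht.2⟩
        -- L¹ distance estimate
        have he_int : Integrable (fun ξ => v τ ξ - wf t ξ) := hτ.1.2.1.sub (hwf_int t)
        have habs : (∫ ξ, |v τ ξ - wf t ξ|) = ∫ ξ, |u τ ξ - u t ξ| := by
          apply integral_congr_ae
          filter_upwards [hτ.1.1, hwf_ae t] with ξ h1 h2
          rw [h1, ← h2]
        have hlipval : (∫ ξ, |v τ ξ - wf t ξ|) ≤ L * δ := by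
          rw [habs]
          refine (huLip τ hτIcc t ht).trans ?_
          apply mul_le_mul_of_nonneg_left _ hL0
          rw [abs_sub_comm, abs_of_nonneg hmemΓ.1]
          exact hmemΓ.2
        obtain ⟨hconv_int, hconv_val, hconv_ae⟩ := conv_facts he_int.abs hm_int
        have hptx : ∀ᵐ x ∂(volume : Measure ℝ),
            |Cv τ x - D t x| ≤ ∫ ξ, |v τ ξ - wf t ξ| * m (x - ξ) := by
          obtain ⟨_, _, hex1⟩ := conv_facts hτ.1.2.1 hm_int
          obtain ⟨_, _, hex2⟩ := conv_facts (hwf_int t) hm_int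
          filter_upwards [hex1, hex2] with x hx1 hx2
          have hdiff : Cv τ x - D t x = ∫ ξ, (v τ ξ * m (x - ξ) - wf t ξ * m (x - ξ)) :=
            (integral_sub hx1 hx2).symm
          rw [hdiff]
          rw [← Real.norm_eq_abs]
          refine (norm_integral_le_integral_norm _).trans_eq ?_
          congr 1
          funext ξ
          rw [Real.norm_eq_abs, ← sub_mul, abs_mul, abs_of_nonneg (hm_nonneg _)]
        have hx_int : (∫ x, |Cv τ x - D t x|) ≤ L * δ * Kμ := by
          refine (integral_mono_of_nonneg (ae_of_all _ fun x => abs_nonneg _)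
            hconv_int hptx).trans ?_
          rw [hconv_val]
          exact mul_le_mul hlipval hm_norm hm_nonneg' (mul_nonneg hL0 hδ.le)
        calc G (t - τ) * ∫ x, |Cv τ x - D t x| ≤ G (t - τ) * (L * δ * Kμ) :=
              mul_le_mul_of_nonneg_left hx_int (hG_nonneg _)
          _ = G (t - τ) * (L * Kμ * δ) := by ring
    calc (∫ x, |(∫ τ in Ioc (0:ℝ) t, G (t - τ) * Cv τ x) - D t x|)
        ≤ ∫ τ in Ioc (0:ℝ) t, ∫ x, G (t - τ) * |Cv τ x - D t x| := step2 ▸ step1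
      _ ≤ ∫ τ in Ioc (0:ℝ) t, G (t - τ) * (L * Kμ * δ) := by
          apply integral_mono_of_nonneg
          · exact ae_of_all _ fun τ =>
              integral_nonneg fun x => mul_nonneg (hG_nonneg _) (abs_nonneg _)
          · exact ((hGt_int t).restrict).mul_const _
          · exact hlip
      _ = (∫ τ in Ioc (0:ℝ) t, G (t - τ)) * (L * Kμ * δ) := integral_mul_const _ _
      _ = L * Kμ * δ := by rw [hmass_one t hδt, one_mul]
  -- rewrite of the memory term
  have hE1 : ∀ t ∈ Icc (0:ℝ) T, ∀ x : ℝ,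
      (∫ τ in Ioc (0:ℝ) t, ∫ ξ, u τ ξ * μ (x - ξ) * Γδ (t - τ)) =
        ∫ τ in Ioc (0:ℝ) t, G (t - τ) * Cv τ x := by
    intro t ht x
    apply integral_congr_ae
    have hv_good' := hv_good.filter_mono
      (ae_mono (Measure.restrict_mono (Ioc_subset_Ioc le_rfl ht.2) le_rfl))
    filter_upwards [hv_good', ae_restrict_of_ae (hΓG_shift t)] with τ h1 h2
    rw [integral_mul_const, h1.2 x, h2, mul_comm]
  have hfin : ∀ t ∈ Icc (0:ℝ) T,
      (∫ x, |(∫ τ in Ioc (0:ℝ) t, ∫ ξ, u τ ξ * μ (x - ξ) * Γδ (t - τ)) -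
          ∫ ξ, u t ξ * μ (x - ξ)|) =
        ∫ x, |(∫ τ in Ioc (0:ℝ) t, G (t - τ) * Cv τ x) - D t x| := by
    intro t ht
    congr 1
    funext x
    rw [hE1 t ht x, hE2 t x]
  -- the dominating function for the outer integral
  set h : ℝ → ℝ := fun t => indicator (Icc 0 δ) (fun _ => 2 * (M * Kμ)) t + L * Kμ * δ
    with hh_def
  have hbound : ∀ t ∈ Icc (0:ℝ) T,
      (∫ x, |(∫ τ in Ioc (0:ℝ) t, ∫ ξ, u τ ξ * μ (x - ξ) * Γδ (t - τ)) -
          ∫ ξ, u t ξ * μ (x - ξ)|) ≤ h t := by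
    intro t ht
    rw [hfin t ht, hh_def]
    simp only
    rcases le_total δ t with hc | hc
    · have h1 : (0:ℝ) ≤ indicator (Icc 0 δ) (fun _ => 2 * (M * Kμ)) t :=
        indicator_nonneg (fun y _ => by positivity) t
      have := keyA t ht hc
      linarith
    · have ht0 : t ∈ Icc (0:ℝ) δ := ⟨ht.1, hc⟩
      rw [indicator_of_mem ht0]
      have := keyB t ht
      nlinarith [mul_nonneg (mul_nonneg hL0 hK0) hδ.le]
  have hIa : Integrable (fun t => indicator (Icc 0 δ) (fun _ => 2 * (M * Kμ)) t)
      (volume.restrict (Icc 0 T)) := by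
    apply Integrable.restrict
    rw [integrable_indicator_iff measurableSet_Icc]
    refine (integrableOn_const_iff (by finiteness)).mpr (Or.inr ?_)
    rw [Real.volume_Icc]
    exact ENNReal.ofReal_lt_top
  have hIb : Integrable (fun _ : ℝ => L * Kμ * δ) (volume.restrict (Icc 0 T)) := by
    refine (integrableOn_const_iff (by finiteness)).mpr (Or.inr ?_)
    rw [Real.volume_Icc]
    exact ENNReal.ofReal_lt_top
  have hh_int : Integrable h (volume.restrict (Icc 0 T)) := hIa.add hIb
  have houter : (∫ t in Icc (0:ℝ) T, ∫ x,
      |(∫ τ in Ioc (0:ℝ) t, ∫ ξ, u τ ξ * μ (x - ξ) * Γδ (t - τ)) -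
          ∫ ξ, u t ξ * μ (x - ξ)|) ≤ ∫ t in Icc (0:ℝ) T, h t := by
    apply integral_mono_of_nonneg
    · exact ae_of_all _ fun t => integral_nonneg fun x => abs_nonneg _
    · exact hh_int
    · exact (ae_restrict_iff' measurableSet_Icc).mpr (ae_of_all _ hbound)
  refine houter.trans ?_
  -- compute the integral of the dominating function
  have hint1 : (∫ t in Icc (0:ℝ) T, indicator (Icc 0 δ) (fun _ => 2 * (M * Kμ)) t) ≤
      2 * (M * Kμ) * δ := by
    rw [integral_indicator_const _ measurableSet_Icc, measureReal_def, Measure.restrict_apply measurableSet_Icc,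
      smul_eq_mul]
    have hle : (volume (Icc (0:ℝ) δ ∩ Icc 0 T)).toReal ≤ δ := by
      have h1 : volume (Icc (0:ℝ) δ ∩ Icc 0 T) ≤ volume (Icc (0:ℝ) δ) :=
        measure_mono inter_subset_left
      have h2 : volume (Icc (0:ℝ) δ) = ENNReal.ofReal δ := by
        rw [Real.volume_Icc, sub_zero]
      calc (volume (Icc (0:ℝ) δ ∩ Icc 0 T)).toReal ≤ (volume (Icc (0:ℝ) δ)).toReal := by
            apply ENNReal.toReal_mono _ h1
            rw [h2]; exact ENNReal.ofReal_ne_top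
        _ = δ := by rw [h2, ENNReal.toReal_ofReal hδ.le]
    calc (volume (Icc (0:ℝ) δ ∩ Icc 0 T)).toReal * (2 * (M * Kμ)) ≤ δ * (2 * (M * Kμ)) :=
          mul_le_mul_of_nonneg_right hle (by positivity)
      _ = 2 * (M * Kμ) * δ := by ring
  have hint2 : (∫ _ in Icc (0:ℝ) T, (L * Kμ * δ : ℝ)) = L * Kμ * δ * T := by
    rw [setIntegral_const, measureReal_def, Real.volume_Icc, sub_zero, ENNReal.toReal_ofReal hT.le, smul_eq_mul]
    ring
  have hsplit : (∫ t in Icc (0:ℝ) T, h t) =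
      (∫ t in Icc (0:ℝ) T, indicator (Icc 0 δ) (fun _ => 2 * (M * Kμ)) t) +
        ∫ _ in Icc (0:ℝ) T, (L * Kμ * δ : ℝ) := by
    simp only [hh_def]
    exact integral_add hIa hIb
  rw [hsplit, hint2]
  have : 2 * (M * Kμ) * δ + L * Kμ * δ * T = (2 * M + L * T) * Kμ * δ := by ring
  linarith [hint1]
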